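/- Let G and G' be abelian groups, let A ⊆ G be a finite set with 0 ∈ A that is d-NIP in G, and let φ: A → A' ⊆ G' be a Freiman s-isomorphism with s ≥ 4 and φ(0) = 0. If G' is generated by A', then A' is d-NIP in G'. -/

import Mathlib

open Pointwise

/-- A subset `A` of an additive group `G` is `d`-NIP if there are no `x₁,…,x_d ∈ G` and
`(g_S)_{S ⊆ [d]}` in `G` with `g_S + xᵢ ∈ A ↔ i ∈ S`. -/
def IsNIPAddSet {G : Type*} [AddGroup G] (A : Set G) (d : ℕ) : Prop :=
  ¬ ∃ (x : Fin d → G) (g : Finset (Fin d) → G),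
      ∀ (S : Finset (Fin d)) (i : Fin d), g S + x i ∈ A ↔ i ∈ S

/-- `φ` restricts to a Freiman `s`-isomorphism from `A` onto `A'`. -/
def IsFreimanIsoOn {G G' : Type*} [AddCommGroup G] [AddCommGroup G']
    (φ : G → G') (A : Set G) (A' : Set G') (s : ℕ) : Prop :=
  Set.BijOn φ A A' ∧
    ∀ a b : Fin s → G, (∀ i, a i ∈ A) → (∀ i, b i ∈ A) →
      ((∑ i, a i = ∑ i, b i) ↔ (∑ i, φ (a i) = ∑ i, φ (b i)))

private lemma lin1 {M : Type*} [AddCommGroup M] {p q r t : M} (h : p = q)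
    (e : r - t = p - q) : r = t := by
  rw [h, sub_self] at e
  exact sub_eq_zero.mp e

private lemma lin3 {M : Type*} [AddCommGroup M] {p1 q1 p2 q2 p3 q3 r t : M}
    (h1 : p1 = q1) (h2 : p2 = q2) (h3 : p3 = q3)
    (e : r - t = (p1 - q1) + (p2 - q2) + (p3 - q3)) : r = t := by
  rw [h1, h2, h3, sub_self, sub_self, sub_self, add_zero, add_zero] at e
  exact sub_eq_zero.mp e

private lemma sum_aux {M : Type*} [AddCommMonoid M] {s : ℕ} (hs : 3 ≤ s) (a b c : M) :
    (∑ i : Fin s, if (i : ℕ) = 0 then a else if (i : ℕ) = 1 then b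
        else if (i : ℕ) = 2 then c else 0) = a + b + c := by
  have h1 : (∑ i : Fin s, if (i : ℕ) = 0 then a else if (i : ℕ) = 1 then b
        else if (i : ℕ) = 2 then c else 0)
      = ∑ k ∈ Finset.range s,
          (if k = 0 then a else if k = 1 then b else if k = 2 then c else 0) :=
    Fin.sum_univ_eq_sum_range
      (fun k => if k = 0 then a else if k = 1 then b else if k = 2 then c else 0) s
  have h2 : ∀ k ∈ Finset.range s, k ∉ Finset.range 3 →
      (if k = 0 then a else if k = 1 then b else if k = 2 then c else 0) = 0 := by
    intro k _ hk
    rw [Finset.mem_range, not_lt] at hk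
    rw [if_neg (by omega), if_neg (by omega), if_neg (by omega)]
  rw [h1, ← Finset.sum_subset (Finset.range_subset_range.mpr hs) h2]
  norm_num [Finset.sum_range_succ]

private lemma freiman3 {G G' : Type*} [AddCommGroup G] [AddCommGroup G']
    {A : Set G} {A' : Set G'} {φ : G → G'} {s : ℕ} (hs : 4 ≤ s)
    (h0 : (0 : G) ∈ A) (hφ0 : φ 0 = 0) (hφ : IsFreimanIsoOn φ A A' s)
    {a b c a' b' c' : G} (ha : a ∈ A) (hb : b ∈ A) (hc : c ∈ A)
    (ha' : a' ∈ A) (hb' : b' ∈ A) (hc' : c' ∈ A) :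
    a + b + c = a' + b' + c' ↔ φ a + φ b + φ c = φ a' + φ b' + φ c' := by
  have h3 : 3 ≤ s := by omega
  have key := hφ.2
    (fun i => if (i : ℕ) = 0 then a else if (i : ℕ) = 1 then b
      else if (i : ℕ) = 2 then c else 0)
    (fun i => if (i : ℕ) = 0 then a' else if (i : ℕ) = 1 then b'
      else if (i : ℕ) = 2 then c' else 0)
    (fun i => by split_ifs <;> assumption)
    (fun i => by split_ifs <;> assumption)
  simp only [apply_ite φ, hφ0] at key
  rw [sum_aux h3 a b c, sum_aux h3 a' b' c', sum_aux h3 (φ a) (φ b) (φ c),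
    sum_aux h3 (φ a') (φ b') (φ c')] at key
  exact key

theorem freiman_iso_preserves_nip {G G' : Type*} [AddCommGroup G] [AddCommGroup G']
    (A : Set G) (A' : Set G') (φ : G → G') (d s : ℕ) (hd : 1 ≤ d) (hs : 4 ≤ s)
    (hA : A.Finite) (h0 : (0 : G) ∈ A) (hφ0 : φ 0 = 0)
    (hφ : IsFreimanIsoOn φ A A' s)
    (hgen : AddSubgroup.closure A' = ⊤)
    (hNIP : IsNIPAddSet A d) :
    IsNIPAddSet A' d := by
  classical
  have hne : Nonempty G := ⟨0⟩
  have f2 : ∀ a ∈ A, ∀ b ∈ A, ∀ c ∈ A, ∀ e ∈ A,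
      (a + b = c + e ↔ φ a + φ b = φ c + φ e) := by
    intro a ha b hb c hc e he
    have := freiman3 hs h0 hφ0 hφ ha hb h0 hc he h0
    simpa [hφ0] using this
  rintro ⟨x, g, hxg⟩
  by_cases hcov : ∀ z : G, ∃ a ∈ A, ∃ b ∈ A, z = a - b
  · -- `G = A - A`: the Freiman isomorphism extends to a group isomorphism.
    choose α hα β hβ hαβ using hcov
    set Φ : G → G' := fun z => φ (α z) - φ (β z) with hΦdef
    have compat : ∀ (z : G), ∀ a ∈ A, ∀ b ∈ A, z = a - b → Φ z = φ a - φ b := by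
      intro z a ha b hb hz
      have h2 : a - b = α z - β z := by rw [← hz]; exact hαβ z
      have h1 : a + β z = α z + b := lin1 h2 (by abel)
      have h3 := (f2 a ha (β z) (hβ z) (α z) (hα z) b hb).mp h1
      show φ (α z) - φ (β z) = φ a - φ b
      exact lin1 h3.symm (by abel)
    have Φadd : ∀ y z : G, Φ (y + z) = Φ y + Φ z := by
      intro y z
      have hG : α (y + z) + β y + β z = β (y + z) + α y + α z :=
        lin3 (hαβ (y + z)).symm (hαβ y) (hαβ z) (by abel)
      have h3 := (freiman3 hs h0 hφ0 hφ (hα _) (hβ y) (hβ z) (hβ _) (hα y) (hα z)).mp hG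
      show φ (α (y + z)) - φ (β (y + z)) = (φ (α y) - φ (β y)) + (φ (α z) - φ (β z))
      exact lin1 h3 (by abel)
    have ΦA : ∀ a ∈ A, Φ a = φ a := by
      intro a ha
      rw [compat a a ha 0 h0 (sub_zero a).symm, hφ0, sub_zero]
    have Φinj : ∀ y z : G, Φ y = Φ z → y = z := by
      intro y z h
      have h' : φ (α y) - φ (β y) = φ (α z) - φ (β z) := h
      have h1 : φ (α y) + φ (β z) = φ (α z) + φ (β y) := lin1 h' (by abel)
      have h2 := (f2 _ (hα y) _ (hβ z) _ (hα z) _ (hβ y)).mpr h1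
      exact lin3 h2 (hαβ y) (hαβ z).symm (by abel)
    have Φsurj : ∀ w : G', ∃ z : G, Φ z = w := by
      intro w
      let Ψ : G →+ G' := AddMonoidHom.mk' Φ Φadd
      have hsub : A' ⊆ (Ψ.range : Set G') := by
        intro a' ha'
        obtain ⟨a, haA, hae⟩ := hφ.1.2.2 ha'
        exact ⟨a, by rw [show Ψ a = Φ a from rfl, ΦA a haA, hae]⟩
      have hle : AddSubgroup.closure A' ≤ Ψ.range := (AddSubgroup.closure_le _).mpr hsub
      rw [hgen] at hle
      exact hle (AddSubgroup.mem_top w)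
    have mem_iff : ∀ z : G, z ∈ A ↔ Φ z ∈ A' := by
      intro z
      constructor
      · intro hz; rw [ΦA z hz]; exact hφ.1.1 hz
      · intro hz
        obtain ⟨a, haA, hae⟩ := hφ.1.2.2 hz
        have : Φ a = Φ z := by rw [ΦA a haA, hae]
        exact (Φinj a z this) ▸ haA
    choose inv hinv using Φsurj
    exact hNIP ⟨fun i => inv (x i), fun S => inv (g S), fun S i => by
      rw [mem_iff (inv (g S) + inv (x i)), Φadd, hinv, hinv]
      exact hxg S i⟩
  · -- there is `c ∉ A - A`; use it as witness for the empty set.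
    push_neg at hcov
    obtain ⟨c, hc⟩ := hcov
    set ψ : G' → G := Function.invFunOn φ A with hψdef
    have hψ : ∀ w ∈ A', ψ w ∈ A ∧ φ (ψ w) = w := by
      intro w hw
      obtain ⟨a, haA, hae⟩ := hφ.1.2.2 hw
      exact ⟨Function.invFunOn_mem ⟨a, haA, hae⟩, Function.invFunOn_eq ⟨a, haA, hae⟩⟩
    have hmemA' : ∀ (S : Finset (Fin d)) (i : Fin d), i ∈ S → g S + x i ∈ A' :=
      fun S i hi => (hxg S i).mpr hi
    set X : Fin d → G := fun i => ψ (g Finset.univ + x i) with hXdef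
    have hXA : ∀ i, X i ∈ A := fun i => (hψ _ (hmemA' _ i (Finset.mem_univ i))).1
    have hφX : ∀ i, φ (X i) = g Finset.univ + x i :=
      fun i => (hψ _ (hmemA' _ i (Finset.mem_univ i))).2
    refine hNIP ⟨X, fun S => if h : S.Nonempty then ψ (g S + x h.choose) - X h.choose
      else c, ?_⟩
    intro S i
    by_cases hS : S.Nonempty
    · simp only [dif_pos hS]
      have hj : hS.choose ∈ S := hS.choose_spec
      obtain ⟨huA, hφu⟩ := hψ _ (hmemA' S hS.choose hj)
      constructor
      · intro hmem
        have key := (f2 _ huA (X i) (hXA i) _ hmem (X hS.choose) (hXA hS.choose)).mp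
          (by abel)
        rw [hφu, hφX i, hφX hS.choose] at key
        have he : φ (ψ (g S + x hS.choose) - X hS.choose + X i) = g S + x i :=
          lin1 key.symm (by abel)
        exact (hxg S i).mp (he ▸ hφ.1.1 hmem)
      · intro hiS
        obtain ⟨hvA, hφv⟩ := hψ _ (hmemA' S i hiS)
        have heq : ψ (g S + x hS.choose) + X i = ψ (g S + x i) + X hS.choose := by
          refine (f2 _ huA (X i) (hXA i) _ hvA (X hS.choose) (hXA hS.choose)).mpr ?_
          rw [hφu, hφX i, hφv, hφX hS.choose]
          abel
        have he : ψ (g S + x hS.choose) - X hS.choose + X i = ψ (g S + x i) :=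
          lin1 heq (by abel)
        rw [he]
        exact hvA
    · simp only [dif_neg hS]
      rw [Finset.not_nonempty_iff_eq_empty] at hS
      subst hS
      simp only [Finset.notMem_empty, iff_false]
      intro hmem
      exact hc _ hmem (X i) (hXA i) (by abel)
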